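/- Let a, b, z₁, …, z_m be nonnegative reals with a + b = z₁ + ⋯ + z_m and a ≤ z_m ≤ b. Then ln(1+b) + ln(1+a) ≤ ∑_{i=1}^m ln(1+z_i). -/

import Mathlib

open Real Finset

lemma aux_one_add_sum_le_prod {ι : Type*} (s : Finset ι) (f : ι → ℝ)
    (hf : ∀ i ∈ s, 0 ≤ f i) :
    1 + ∑ i ∈ s, f i ≤ ∏ i ∈ s, (1 + f i) := by
  induction s using Finset.cons_induction with
  | empty => simp
  | cons a s has ih =>
    rw [Finset.sum_cons, Finset.prod_cons]
    have h1 : 0 ≤ f a := hf a (Finset.mem_cons_self a s)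
    have h2 : 1 + ∑ i ∈ s, f i ≤ ∏ i ∈ s, (1 + f i) :=
      ih (fun i hi => hf i (Finset.mem_cons_of_mem hi))
    have h3 : 0 ≤ ∑ i ∈ s, f i := Finset.sum_nonneg fun i hi => hf i (Finset.mem_cons_of_mem hi)
    nlinarith

theorem stmt_8 (m : ℕ) (a b : ℝ) (z : Fin (m + 1) → ℝ)
    (ha : 0 ≤ a) (hb : 0 ≤ b) (hz : ∀ i, 0 ≤ z i)
    (hsum : a + b = ∑ i, z i)
    (haz : a ≤ z (Fin.last m)) (hzb : z (Fin.last m) ≤ b) :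
    Real.log (1 + b) + Real.log (1 + a) ≤ ∑ i, Real.log (1 + z i) := by
  set L := Fin.last m
  have hsplit : z L + ∑ i ∈ Finset.univ.erase L, z i = ∑ i, z i :=
    Finset.add_sum_erase _ _ (Finset.mem_univ L)
  set S := ∑ i ∈ Finset.univ.erase L, z i with hS
  have hSnn : 0 ≤ S := Finset.sum_nonneg fun i _ => hz i
  have hprod : 1 + S ≤ ∏ i ∈ Finset.univ.erase L, (1 + z i) :=
    aux_one_add_sum_le_prod _ _ (fun i _ => hz i)
  have hzpos : ∀ i : Fin (m + 1), (0:ℝ) < 1 + z i := fun i => by linarith [hz i]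
  have hprodpos : 0 < ∏ i ∈ Finset.univ.erase L, (1 + z i) :=
    Finset.prod_pos fun i _ => hzpos i
  have key : (1 + b) * (1 + a) ≤ ∏ i, (1 + z i) := by
    rw [← Finset.mul_prod_erase _ _ (Finset.mem_univ L)]
    have h1 : (1 + b) * (1 + a) ≤ (1 + z L) * (1 + S) := by
      have hSeq : S = a + b - z L := by
        have := hsplit.trans hsum.symm; linarith
      nlinarith [mul_nonneg (sub_nonneg.2 haz) (sub_nonneg.2 hzb)]
    calc (1 + b) * (1 + a) ≤ (1 + z L) * (1 + S) := h1
      _ ≤ (1 + z L) * ∏ i ∈ Finset.univ.erase L, (1 + z i) := by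
          exact mul_le_mul_of_nonneg_left hprod (le_of_lt (hzpos L))
  calc Real.log (1 + b) + Real.log (1 + a)
      = Real.log ((1 + b) * (1 + a)) := (Real.log_mul (by linarith) (by linarith)).symm
    _ ≤ Real.log (∏ i, (1 + z i)) := Real.log_le_log (by nlinarith) key
    _ = ∑ i, Real.log (1 + z i) := Real.log_prod (fun i _ => ne_of_gt (hzpos i))
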